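/- Let w and m be positive natural numbers with 1 ≤ m ≤ 2^w. For each k with 1 ≤ k ≤ m, the number of integers j with 0 ≤ j < 2^w and ⌊m·j/2^w⌋ = k − 1 is equal to either ⌊2^w/m⌋ or ⌈2^w/m⌉. -/

import Mathlib

/-- preimage counts for the multiply-and-floor method are near-uniform.
For `1 ≤ m ≤ 2^w` and `1 ≤ k ≤ m`, the number of integers `j` with `0 ≤ j < 2^w` and
`⌊m·j/2^w⌋ = k − 1` equals either `⌊2^w/m⌋` or `⌈2^w/m⌉`. -/
theorem floorMul_fiber_card_floor_or_ceil (w m : ℕ) (hw : 0 < w) (hm1 : 1 ≤ m)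
    (hm2 : m ≤ 2 ^ w) :
    ∀ k : ℕ, 1 ≤ k → k ≤ m →
      ((((Finset.range (2 ^ w)).filter (fun j => m * j / 2 ^ w = k - 1)).card : ℤ)
          = ⌊((2 : ℚ) ^ w) / m⌋ ∨
        (((Finset.range (2 ^ w)).filter (fun j => m * j / 2 ^ w = k - 1)).card : ℤ)
          = ⌈((2 : ℚ) ^ w) / m⌉) := by
  intro k hk1 hk2
  set N := 2 ^ w with hNdef
  have hN : 0 < N := Nat.pow_pos (by norm_num)
  have hm : 0 < m := hm1
  set t := k - 1 with ht
  have htm : t + 1 ≤ m := by omega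
  set c : ℕ → ℕ := fun x => (x + m - 1) / m with hc
  -- characterization of the ceiling division
  have hchar : ∀ x j : ℕ, c x ≤ j ↔ x ≤ m * j := by
    intro x j
    have : c x ≤ j ↔ x + m - 1 < (j + 1) * m := by
      rw [hc]
      constructor
      · intro h
        have := Nat.lt_succ_of_le h
        exact (Nat.div_lt_iff_lt_mul hm).mp this
      · intro h
        exact Nat.lt_succ_iff.mp ((Nat.div_lt_iff_lt_mul hm).mpr h)
    rw [this, Nat.succ_mul, Nat.mul_comm j m]
    generalize m * j = p
    omega
  have hlt : ∀ x j : ℕ, j < c x ↔ m * j < x := by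
    intro x j
    rw [← Nat.not_le, ← Nat.not_le, hchar]
  -- the fiber is an interval
  have hfilter : (Finset.range N).filter (fun j => m * j / N = t)
      = Finset.Ico (c (t * N)) (c ((t + 1) * N)) := by
    ext j
    simp only [Finset.mem_filter, Finset.mem_range, Finset.mem_Ico]
    constructor
    · rintro ⟨hj, hdiv⟩
      constructor
      · rw [hchar]
        calc t * N = m * j / N * N := by rw [hdiv]
        _ ≤ m * j := Nat.div_mul_le_self _ _
      · rw [hlt]
        calc m * j < (m * j / N + 1) * N :=
          (Nat.div_lt_iff_lt_mul hN).mp (Nat.lt_succ_self _)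
        _ = (t + 1) * N := by rw [hdiv]
    · rintro ⟨h1, h2⟩
      rw [hchar] at h1
      rw [hlt] at h2
      have hjN : j < N := by
        have : m * j < m * N :=
          lt_of_lt_of_le h2 (Nat.mul_le_mul_right N htm)
        exact Nat.lt_of_mul_lt_mul_left this
      refine ⟨hjN, ?_⟩
      exact Nat.div_eq_of_lt_le h1 h2
  rw [hfilter, Nat.card_Ico]
  -- arithmetic facts
  set A := c (t * N) with hA
  set B := c ((t + 1) * N) with hB
  set C := c N with hC
  set q := N / m with hq
  set r := N % m with hr
  have hqr : m * q + r = N := Nat.div_add_mod N m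
  have hrm : r < m := Nat.mod_lt _ hm
  have hle : ∀ x : ℕ, x ≤ m * c x := fun x => (hchar x (c x)).mp le_rfl
  have hub : ∀ x : ℕ, m * c x ≤ x + m - 1 := by
    intro x
    have := Nat.div_mul_le_self (x + m - 1) m
    rw [hc]
    calc m * ((x + m - 1) / m) = (x + m - 1) / m * m := Nat.mul_comm _ _
    _ ≤ x + m - 1 := this
  have hAle : t * N ≤ m * A := hle _
  have hAub : m * A ≤ t * N + m - 1 := hub _
  have hBle : (t + 1) * N ≤ m * B := hle _
  have hCle : N ≤ m * C := hle _
  have hCub : m * C ≤ N + m - 1 := hub _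
  -- A + q ≤ B
  have h1 : A + q ≤ B := by
    have hmul : m * (A + q) < m * (B + 1) := by
      have e1 : m * (A + q) = m * A + m * q := Nat.mul_add m A q
      have e2 : m * (B + 1) = m * B + m := by ring
      have : m * q ≤ N := by omega
      have : m * A + m * q ≤ t * N + m - 1 + N := by omega
      have hB' : t * N + N ≤ m * B := by
        calc t * N + N = (t + 1) * N := by ring
        _ ≤ m * B := hBle
      omega
    have := Nat.lt_of_mul_lt_mul_left hmul
    omega
  -- B ≤ A + C
  have h2 : B ≤ A + C := by
    rw [hchar]
    calc (t + 1) * N = t * N + N := by ring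
    _ ≤ m * A + m * C := by omega
    _ = m * (A + C) := (Nat.mul_add m A C).symm
  -- q ≤ C
  have h3 : q ≤ C := by
    have : m * q ≤ m * C := by omega
    exact Nat.le_of_mul_le_mul_left this hm
  -- C ≤ q + 1
  have h4 : C ≤ q + 1 := by
    rw [hchar]
    have : m * (q + 1) = m * q + m := by ring
    omega
  have key : B - A = q ∨ B - A = C := by omega
  -- floor and ceiling values
  have hcast : ((2 : ℚ) ^ w) = (N : ℚ) := by rw [hNdef]; push_cast; ring
  have hm0 : (0 : ℚ) < (m : ℚ) := by exact_mod_cast hm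
  have hfloor : ⌊((2 : ℚ) ^ w) / m⌋ = (q : ℤ) := by
    rw [hcast, Int.floor_eq_iff]
    constructor
    · rw [le_div_iff₀ hm0]
      have h' : ((m * q : ℕ) : ℚ) ≤ (N : ℚ) := by exact_mod_cast (by omega : m * q ≤ N)
      push_cast at h' ⊢
      nlinarith [h']
    · rw [div_lt_iff₀ hm0]
      have hlt' : N < m * (q + 1) := by
        have : m * (q + 1) = m * q + m := by ring
        omega
      have h' : ((N : ℕ) : ℚ) < ((m * (q + 1) : ℕ) : ℚ) := by exact_mod_cast hlt'
      push_cast at h' ⊢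
      nlinarith [h']
  have hceil : ⌈((2 : ℚ) ^ w) / m⌉ = (C : ℤ) := by
    rw [hcast, Int.ceil_eq_iff]
    constructor
    · rw [lt_div_iff₀ hm0]
      have hlt' : m * C < N + m := by omega
      have h' : ((m * C : ℕ) : ℚ) < ((N + m : ℕ) : ℚ) := by exact_mod_cast hlt'
      push_cast at h' ⊢
      nlinarith [h']
    · rw [div_le_iff₀ hm0]
      have h' : ((N : ℕ) : ℚ) ≤ ((m * C : ℕ) : ℚ) := by exact_mod_cast hCle
      push_cast at h' ⊢
      nlinarith [h']
  rcases key with h | h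
  · left; rw [hfloor]; omega
  · right; rw [hceil]; omega
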